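/- Let p ≥ 2 be a natural number and let x be a real number with |x| < 1. Then ∫_0^x (1 - t^p)^(-(p-1)/p) dt = Σ_{k=0}^∞ ( (∏_{i=0}^{k-1} ((p-1)/p + i)) / (k! · (k·p + 1)) ) · x^{k·p+1}, where the series on the right converges. -/

import Mathlib

open Real intervalIntegral Finset Filter Topology

noncomputable def bc (a : ℝ) (k : ℕ) : ℝ :=
  (∏ i ∈ Finset.range k, (a + i)) / k.factorial

lemma bc_pos {a : ℝ} (ha : 0 < a) (k : ℕ) : 0 < bc a k := by
  apply div_pos
  · exact Finset.prod_pos fun i _ => by positivity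
  · exact_mod_cast k.factorial_pos

lemma bc_succ (a : ℝ) (k : ℕ) : bc a (k + 1) = bc a k * (a + k) / (k + 1) := by
  have h : (k.factorial : ℝ) ≠ 0 := by exact_mod_cast k.factorial_ne_zero
  have h2 : ((k : ℝ) + 1) ≠ 0 := by positivity
  rw [bc, bc, Finset.prod_range_succ, Nat.factorial_succ]
  push_cast
  rw [div_mul_eq_mul_div, div_div, mul_comm ((k:ℝ)+1)]

lemma tendsto_ratio (a : ℝ) : Tendsto (fun k : ℕ => (a + k) / (k + 1)) atTop (𝓝 1) := by
  have h : (fun k : ℕ => (a + k) / (k + 1)) = fun k : ℕ => 1 + (a - 1) / (k + 1) := by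
    funext k
    have : (k : ℝ) + 1 ≠ 0 := by positivity
    field_simp
    ring
  rw [h]
  have : Tendsto (fun k : ℕ => (a - 1) / (k + 1)) atTop (𝓝 0) := by
    apply Tendsto.div_atTop tendsto_const_nhds
    exact tendsto_atTop_add_const_right _ 1 tendsto_natCast_atTop_atTop
  simpa using tendsto_const_nhds.add this

lemma summable_bc {a : ℝ} (ha : 0 < a) {r : ℝ} (hr0 : 0 < r) (hr : r < 1) :
    Summable fun k => bc a k * r ^ k := by
  apply summable_of_ratio_test_tendsto_lt_one hr
  · exact Filter.Eventually.of_forall fun k =>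
      ne_of_gt (mul_pos (bc_pos ha k) (pow_pos hr0 k))
  · have key : (fun k : ℕ => ‖bc a (k+1) * r ^ (k+1)‖ / ‖bc a k * r ^ k‖)
        = fun k : ℕ => (a + k) / (k + 1) * r := by
      funext k
      rw [Real.norm_eq_abs, Real.norm_eq_abs,
        abs_of_pos (mul_pos (bc_pos ha _) (pow_pos hr0 _)),
        abs_of_pos (mul_pos (bc_pos ha _) (pow_pos hr0 _))]
      rw [bc_succ, pow_succ]
      have h1 : bc a k ≠ 0 := ne_of_gt (bc_pos ha k)
      have h2 : r ^ k ≠ 0 := by positivity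
      have h4 : (k : ℝ) + 1 ≠ 0 := by positivity
      field_simp
    rw [key]
    simpa using (tendsto_ratio a).mul_const r

lemma summable_bc_deriv {a : ℝ} (ha : 0 < a) {r : ℝ} (hr0 : 0 < r) (hr : r < 1) :
    Summable fun k : ℕ => bc a k * k * r ^ (k - 1) := by
  apply summable_of_ratio_test_tendsto_lt_one hr
  · filter_upwards [Filter.eventually_ge_atTop 1] with k hk
    have hk0 : (0:ℝ) < k := by exact_mod_cast hk
    exact ne_of_gt (mul_pos (mul_pos (bc_pos ha k) hk0) (pow_pos hr0 _))
  · have key : ∀ᶠ k : ℕ in atTop, ‖bc a (k+1) * (↑(k+1)) * r ^ (k+1-1)‖ / ‖bc a k * k * r ^ (k-1)‖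
        = (a + k) / k * r := by
      filter_upwards [Filter.eventually_ge_atTop 1] with k hk
      have hk0 : (0:ℝ) < k := by exact_mod_cast hk
      have hk1 : (0:ℝ) < (k:ℝ) + 1 := by positivity
      rw [Real.norm_eq_abs, Real.norm_eq_abs,
        abs_of_pos (mul_pos (mul_pos (bc_pos ha _) (by exact_mod_cast Nat.succ_pos k)) (pow_pos hr0 _)),
        abs_of_pos (mul_pos (mul_pos (bc_pos ha _) hk0) (pow_pos hr0 _))]
      rw [bc_succ]
      have h1 : bc a k ≠ 0 := ne_of_gt (bc_pos ha k)
      have h2 : r ^ (k-1) ≠ 0 := by positivity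
      have h3 : k + 1 - 1 = (k - 1) + 1 := by omega
      rw [h3, pow_succ]
      push_cast
      field_simp
    have hlim : Tendsto (fun k : ℕ => (a + k) / k * r) atTop (𝓝 r) := by
      have h2 : Tendsto (fun k : ℕ => a / k) atTop (𝓝 0) :=
        Tendsto.div_atTop tendsto_const_nhds tendsto_natCast_atTop_atTop
      have h3 : ∀ᶠ k : ℕ in atTop, (a + (k:ℝ)) / k = 1 + a / k := by
        filter_upwards [Filter.eventually_ge_atTop 1] with k hk
        have hk0 : (k:ℝ) ≠ 0 := by
          have : (0:ℝ) < k := by exact_mod_cast hk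
          positivity
        field_simp
        ring
      have h : Tendsto (fun k : ℕ => (a + (k:ℝ)) / k) atTop (𝓝 1) := by
        rw [tendsto_congr' h3]
        simpa using tendsto_const_nhds.add h2
      simpa using h.mul_const r
    exact hlim.congr' (key.mono fun k hk => hk.symm)

lemma summable_bc_of_abs_lt {a : ℝ} (ha : 0 < a) {y : ℝ} (hy : |y| < 1) :
    Summable fun k => bc a k * y ^ k := by
  set s := (|y| + 1) / 2 with hs
  have hs0 : 0 < s := by positivity
  have hs1 : s < 1 := by rw [hs]; linarith
  have hys : |y| ≤ s := by rw [hs]; linarith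
  apply Summable.of_norm_bounded (summable_bc ha hs0 hs1)
  intro k
  rw [Real.norm_eq_abs, abs_mul, abs_of_pos (bc_pos ha k), abs_pow]
  exact mul_le_mul_of_nonneg_left (pow_le_pow_left₀ (abs_nonneg y) hys k)
    (bc_pos ha k).le

lemma hasSum_binomial {a : ℝ} (ha : 0 < a) {u : ℝ} (hu : |u| < 1) :
    HasSum (fun k : ℕ => bc a k * u ^ k) ((1 - u) ^ (-a)) := by
  set r := (|u| + 1) / 2 with hrdef
  have hr0 : 0 < r := by positivity
  have hr1 : r < 1 := by rw [hrdef]; linarith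
  have hur : |u| < r := by rw [hrdef]; linarith
  set t : Set ℝ := Set.Ioo (-r) r with htdef
  have habs : ∀ y ∈ t, |y| < 1 := by
    intro y hy
    rw [abs_lt]; constructor <;> [linarith [hy.1]; linarith [hy.2]]
  have habsr : ∀ y ∈ t, |y| ≤ r := by
    intro y hy
    rw [abs_le]; exact ⟨hy.1.le, hy.2.le⟩
  have h0t : (0:ℝ) ∈ t := by constructor <;> simp [hr0] <;> linarith
  have hut : u ∈ t := by
    rw [htdef, Set.mem_Ioo, ← abs_lt]; exact hur
  set F : ℝ → ℝ := fun y => ∑' k : ℕ, bc a k * y ^ k with hFdef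
  set G : ℕ → ℝ → ℝ := fun k y => bc a k * ((k:ℝ) * y ^ (k - 1)) with hGdef
  have hbound : ∀ (k : ℕ) (y : ℝ), y ∈ t → ‖G k y‖ ≤ bc a k * k * r ^ (k - 1) := by
    intro k y hy
    rw [hGdef]
    simp only
    rw [Real.norm_eq_abs, abs_mul, abs_mul, abs_pow, abs_of_pos (bc_pos ha k),
      Nat.abs_cast, mul_assoc]
    refine mul_le_mul_of_nonneg_left (mul_le_mul_of_nonneg_left ?_ k.cast_nonneg)
      (bc_pos ha k).le
    exact pow_le_pow_left₀ (abs_nonneg y) (habsr y hy) _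
  have hGsum : ∀ y ∈ t, Summable fun k => G k y := by
    intro y hy
    apply Summable.of_norm_bounded (summable_bc_deriv ha hr0 hr1)
    exact fun k => hbound k y hy
  have hderiv : ∀ y ∈ t, HasDerivAt F (∑' k : ℕ, G k y) y := by
    intro y hy
    apply hasDerivAt_tsum_of_isPreconnected (summable_bc_deriv ha hr0 hr1)
      isOpen_Ioo (convex_Ioo (-r) r).isPreconnected
      (fun k z _ => (hasDerivAt_pow k z).const_mul (bc a k)) hbound h0t
      _ hy
    exact summable_bc_of_abs_lt ha (by simp : |(0:ℝ)| < 1)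
  -- the key ODE identity
  have hkey : ∀ y ∈ t, (1 - y) * (∑' k : ℕ, G k y) = a * F y := by
    intro y hy
    set T := ∑' k : ℕ, G k y with hTdef
    have hT : HasSum (fun k => G k y) T := (hGsum y hy).hasSum
    have hshift : HasSum (fun k => G (k + 1) y) (T - ∑ i ∈ Finset.range 1, G i y) :=
      (hasSum_nat_add_iff' 1).mpr hT
    have h01 : ∑ i ∈ Finset.range 1, G i y = 0 := by simp [hGdef]
    rw [h01, sub_zero] at hshift
    have heq1 : (fun k => G (k + 1) y) = fun k : ℕ => (a + k) * (bc a k * y ^ k) := by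
      funext k
      rw [hGdef]
      simp only [Nat.add_sub_cancel]
      rw [bc_succ]
      have : (k:ℝ) + 1 ≠ 0 := by positivity
      push_cast
      field_simp
    rw [heq1] at hshift
    have hFy : HasSum (fun k : ℕ => bc a k * y ^ k) (F y) :=
      (summable_bc_of_abs_lt ha (habs y hy)).hasSum
    have hymul : HasSum (fun k : ℕ => (k:ℝ) * (bc a k * y ^ k)) (y * T) := by
      have h := hT.mul_left y
      have heq2 : (fun k => y * G k y) = fun k : ℕ => (k:ℝ) * (bc a k * y ^ k) := by
        funext k
        cases k with
        | zero => simp [hGdef]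
        | succ n =>
          simp only [hGdef, Nat.add_sub_cancel]
          push_cast
          rw [pow_succ]
          ring
      rwa [heq2] at h
    have hsub := hshift.sub hymul
    have heq3 : (fun k : ℕ => (a + k) * (bc a k * y ^ k) - (k:ℝ) * (bc a k * y ^ k))
        = fun k : ℕ => a * (bc a k * y ^ k) := by
      funext k; ring
    rw [heq3] at hsub
    have := hsub.unique (hFy.mul_left a)
    linear_combination this
  -- H is constant
  set H : ℝ → ℝ := fun y => F y * (1 - y) ^ a with hHdef
  have hH : ∀ y ∈ t, HasDerivAt H 0 y := by
    intro y hy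
    have hy1 : |y| < 1 := habs y hy
    have h1y : (0:ℝ) < 1 - y := by
      have := (abs_lt.mp hy1).2; linarith
    have hrp : HasDerivAt (fun z : ℝ => (1 - z) ^ a) (-1 * a * (1 - y) ^ (a - 1)) y := by
      have hlin : HasDerivAt (fun z : ℝ => 1 - z) (-1) y := by
        simpa using (hasDerivAt_id y).const_sub 1
      exact hlin.rpow_const (Or.inl h1y.ne')
    have hprod := (hderiv y hy).mul hrp
    have hzero : (∑' k : ℕ, G k y) * (1 - y) ^ a + F y * (-1 * a * (1 - y) ^ (a - 1)) = 0 := by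
      have hpow : (1 - y) ^ a = (1 - y) ^ (a - 1) * (1 - y) := by
        rw [← Real.rpow_add_one h1y.ne' (a - 1)]
        norm_num
      rw [hpow]
      linear_combination (1 - y) ^ (a - 1) * hkey y hy
    rw [hzero] at hprod
    exact hprod
  have hconst : ∀ y ∈ t, H y = H 0 := by
    intro y hy
    apply (convex_Ioo (-r) r).is_const_of_fderivWithin_eq_zero
      (fun z hz => ((hH z hz).differentiableAt).differentiableWithinAt) ?_ hy h0t
    intro z hz
    rw [fderivWithin_of_isOpen isOpen_Ioo hz]
    have := (hH z hz).hasFDerivAt.fderiv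
    rw [this]
    ext w
    simp
  have hF0 : F 0 = 1 := by
    show (∑' k : ℕ, bc a k * (0:ℝ) ^ k) = 1
    rw [tsum_eq_single 0 (fun k hk => by simp [zero_pow hk])]
    simp [bc]
  have hHu : H u = 1 := by
    rw [hconst u hut, hHdef]
    simp [hF0]
  have h1u : (0:ℝ) < 1 - u := by
    have := (abs_lt.mp hu).2; linarith
  have hFu : F u = (1 - u) ^ (-a) := by
    have hne : (1 - u) ^ a ≠ 0 := (Real.rpow_pos_of_pos h1u a).ne'
    have h2 : F u * (1 - u) ^ a = 1 := hHu
    rw [Real.rpow_neg h1u.le]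
    field_simp
    linarith [h2]
  rw [← hFu]
  exact (summable_bc_of_abs_lt ha hu).hasSum

theorem arcsinp_taylor (p : ℕ) (hp : 2 ≤ p) (x : ℝ) (hx : |x| < 1) :
    HasSum
      (fun k : ℕ =>
        (∏ i ∈ Finset.range k, (((p : ℝ) - 1) / p + i))
          / ((k.factorial : ℝ) * (k * p + 1)) * x ^ (k * p + 1))
      (∫ t in (0 : ℝ)..x, (1 - t ^ p) ^ (-(((p : ℝ) - 1) / p))) := by
  have hp0 : (0:ℝ) < p := by positivity
  have hp2 : (2:ℝ) ≤ p := by exact_mod_cast hp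
  set a : ℝ := ((p:ℝ) - 1) / p with hadef
  have ha : 0 < a := div_pos (by linarith) hp0
  set f : ℕ → C(ℝ, ℝ) := fun k =>
    ⟨fun t => bc a k * t ^ (k * p), continuous_const.mul (continuous_pow (k * p))⟩ with hfdef
  have habs_mem : ∀ t ∈ Set.uIcc (0:ℝ) x, |t| ≤ |x| := by
    intro t ht
    rw [Set.mem_uIcc] at ht
    rw [abs_le]
    rcases ht with ⟨h1, h2⟩ | ⟨h1, h2⟩
    · constructor <;> [nlinarith [abs_nonneg x, le_abs_self x, neg_abs_le x];
        nlinarith [le_abs_self x]]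
    · constructor <;> [nlinarith [neg_abs_le x]; nlinarith [abs_nonneg x, le_abs_self x]]
  set r : ℝ := (|x| + 1) / 2 with hrdef
  have hr0 : 0 < r := by positivity
  have hr1 : r < 1 := by rw [hrdef]; linarith
  have hxr : |x| ≤ r := by rw [hrdef]; linarith
  have hbound : ∀ k : ℕ,
      ‖(f k).restrict (⟨Set.uIcc 0 x, isCompact_uIcc⟩ : TopologicalSpace.Compacts ℝ)‖
        ≤ bc a k * r ^ k := by
    intro k
    apply ContinuousMap.norm_le _ (mul_pos (bc_pos ha k) (pow_pos hr0 k)).le |>.mpr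
    rintro ⟨t, ht⟩
    simp only [ContinuousMap.restrict_apply, hfdef, ContinuousMap.coe_mk]
    rw [Real.norm_eq_abs, abs_mul, abs_of_pos (bc_pos ha k), abs_pow]
    refine mul_le_mul_of_nonneg_left ?_ (bc_pos ha k).le
    calc |t| ^ (k * p) ≤ |x| ^ (k * p) :=
          pow_le_pow_left₀ (abs_nonneg t) (habs_mem t ht) _
      _ ≤ |x| ^ k := pow_le_pow_of_le_one (abs_nonneg x) hx.le
          (Nat.le_mul_of_pos_right k (by omega))
      _ ≤ r ^ k := pow_le_pow_left₀ (abs_nonneg x) hxr _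
  have hsum_norm : Summable fun k =>
      ‖(f k).restrict (⟨Set.uIcc 0 x, isCompact_uIcc⟩ : TopologicalSpace.Compacts ℝ)‖ :=
    Summable.of_nonneg_of_le (fun k => norm_nonneg _) hbound (summable_bc ha hr0 hr1)
  have key := hasSum_intervalIntegral_of_summable_norm (a := 0) (b := x) hsum_norm
  -- rewrite the integrand
  have hint : (∫ t in (0:ℝ)..x, ∑' k : ℕ, f k t)
      = ∫ t in (0:ℝ)..x, (1 - t ^ p) ^ (-a) := by
    apply intervalIntegral.integral_congr
    intro t ht
    have htx : |t| ≤ |x| := habs_mem t ht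
    have htp : |t ^ p| < 1 := by
      rw [abs_pow]
      calc |t| ^ p ≤ |x| ^ p := pow_le_pow_left₀ (abs_nonneg t) htx p
        _ < 1 := pow_lt_one₀ (abs_nonneg x) hx (by omega)
    have hs := (hasSum_binomial ha htp).tsum_eq
    simp only [hfdef, ContinuousMap.coe_mk]
    rw [← hs]
    congr 1
    funext k
    rw [mul_comm k p, pow_mul]
  rw [hint] at key
  -- compute each term's integral
  have hterm : ∀ k : ℕ, (∫ t in (0:ℝ)..x, f k t)
      = (∏ i ∈ Finset.range k, (a + i))
          / ((k.factorial : ℝ) * (k * p + 1)) * x ^ (k * p + 1) := by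
    intro k
    simp only [hfdef, ContinuousMap.coe_mk]
    rw [intervalIntegral.integral_const_mul, integral_pow]
    have hz : (0:ℝ) ^ (k * p + 1) = 0 := zero_pow (by omega)
    rw [hz, sub_zero, bc]
    have h1 : (k.factorial : ℝ) ≠ 0 := by exact_mod_cast k.factorial_ne_zero
    have h2 : ((k * p : ℕ) : ℝ) + 1 ≠ 0 := by positivity
    have h3 : (k:ℝ) * p + 1 ≠ 0 := by positivity
    push_cast
    field_simp
  have heq : (fun k : ℕ => ∫ t in (0:ℝ)..x, f k t)
      = fun k : ℕ => (∏ i ∈ Finset.range k, (((p : ℝ) - 1) / p + i))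
          / ((k.factorial : ℝ) * (k * p + 1)) * x ^ (k * p + 1) := funext hterm
  exact heq ▸ key
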